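/- Linearization of the Brown map on the tropical Jacobian: fix κ > 0 and let Υ_κ = {(x,y) : min(H(x,y), H(y,x)) = κ}, the concave nonagon with vertices V₁ = (κ,2κ), V₂ = (0,κ), V₃ = (−κ,κ), V₄ = (−κ,0), V₅ = (0,−κ), V₆ = (κ,−κ), V₇ = (κ,0), V₈ = (2κ,κ), V₉ = (κ,κ) traversed counterclockwise, each edge V_iV_{i+1} (indices mod 9) having lattice length κ, so the total lattice length is 9κ. Let ν : Υ_κ → ℝ/9κℤ be the bijection determined by ν(V_i) = (i−1)κ and affine on each edge (the point V_i + t(V_{i+1} − V_i), t ∈ [0,1], is sent to (i−1)κ + tκ). Then for every P ∈ Υ_κ, ν(Φ(P)) ≡ ν(P) + 5κ (mod 9κ). -/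
import Mathlib


/-- The Brown map `Φ(x,y) = (x̄, ȳ)` with `x̄ = -x + |y|` and `ȳ = -y + |x̄|`. -/
noncomputable def brownMap (p : ℝ × ℝ) : ℝ × ℝ :=
  (-p.1 + |p.2|, -p.2 + |(-p.1 + |p.2|)|)

/-- `H(x,y) = max(x, -y, -x+y, -x-y)`. -/
noncomputable def H (x y : ℝ) : ℝ :=
  max x (max (-y) (max (-x + y) (-x - y)))

/-- The Abel–Jacobi (lattice-length) bijection `ν : Υ_κ → ℝ/9κℤ` of the concave
nonagon `Υ_κ = {min(H(x,y), H(y,x)) = κ}` with vertices `V₁ = (κ,2κ)`,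
`V₂ = (0,κ)`, `V₃ = (−κ,κ)`, `V₄ = (−κ,0)`, `V₅ = (0,−κ)`, `V₆ = (κ,−κ)`,
`V₇ = (κ,0)`, `V₈ = (2κ,κ)`, `V₉ = (κ,κ)` (counterclockwise): it sends `V_i` to
`(i−1)κ` and is affine on each edge `V_iV_{i+1}`, every edge having lattice
length `κ`.  Explicitly, on `V₁V₂` (`y = x+κ, x ≥ 0`) it equals `κ − x`, on
`V₂V₃` (`y = κ, x ≤ 0`) it equals `κ − x`, on `V₃V₄` (`x = −κ`) it equals
`3κ − y`, on `V₄V₅` (`y = −x−κ`) it equals `4κ + x`, on `V₅V₆` (`y = −κ`) it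
equals `4κ + x`, on `V₆V₇` (`x = κ, y ≤ 0`) it equals `6κ + y`, on `V₇V₈`
(`y = x−κ, x ≥ κ`) it equals `5κ + x`, on `V₈V₉` (`y = κ, x ≥ κ`) it equals
`9κ − x`, and on `V₉V₁` (`x = κ, y ≥ κ`) it equals `7κ + y`. -/
noncomputable def nu (κ : ℝ) (p : ℝ × ℝ) : ℝ :=
  open Classical in
  if p.2 = p.1 + κ ∧ 0 ≤ p.1 then κ - p.1
  else if p.2 = κ ∧ p.1 ≤ 0 then κ - p.1
  else if p.1 = -κ then 3 * κ - p.2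
  else if p.2 = -p.1 - κ then 4 * κ + p.1
  else if p.2 = -κ then 4 * κ + p.1
  else if p.1 = κ ∧ p.2 ≤ 0 then 6 * κ + p.2
  else if p.2 = p.1 - κ ∧ κ ≤ p.1 then 5 * κ + p.1
  else if p.2 = κ ∧ κ ≤ p.1 then 9 * κ - p.1
  else if p.1 = κ ∧ κ ≤ p.2 then 7 * κ + p.2
  else 0

lemma nuE1 (κ x y : ℝ) (h : y = x + κ) (hx : 0 ≤ x) :
    nu κ (x, y) = κ - x := by
  simp only [nu]
  rw [if_pos ⟨h, hx⟩]

lemma nuE2 (κ x y : ℝ) (h : y = κ) (hx : x ≤ 0) :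
    nu κ (x, y) = κ - x := by
  simp only [nu]
  by_cases h1 : y = x + κ ∧ 0 ≤ x
  · rw [if_pos h1]
  · rw [if_neg h1, if_pos ⟨h, hx⟩]

lemma nuE3 (κ x y : ℝ) (hκ : 0 < κ) (hx : x = -κ) :
    nu κ (x, y) = 3 * κ - y := by
  simp only [nu]
  rw [if_neg (by rintro ⟨-, h2⟩; linarith)]
  by_cases h2 : y = κ ∧ x ≤ 0
  · rw [if_pos h2]; obtain ⟨e, -⟩ := h2; linarith
  · rw [if_neg h2, if_pos hx]

lemma nuE4 (κ x y : ℝ) (hκ : 0 < κ) (h : y = -x - κ) (hx : -κ ≤ x) :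
    nu κ (x, y) = 4 * κ + x := by
  simp only [nu]
  rw [if_neg (by rintro ⟨e1, e2⟩; rw [h] at e1; linarith),
      if_neg (by rintro ⟨e1, -⟩; rw [h] at e1; linarith)]
  by_cases h3 : x = -κ
  · rw [if_pos h3]; rw [h3] at h ⊢; linarith
  · rw [if_neg h3, if_pos h]

lemma nuE5 (κ x y : ℝ) (hκ : 0 < κ) (h : y = -κ) (hx : 0 ≤ x) :
    nu κ (x, y) = 4 * κ + x := by
  simp only [nu]
  rw [if_neg (by rintro ⟨e1, e2⟩; rw [h] at e1; linarith),
      if_neg (by rintro ⟨e1, -⟩; rw [h] at e1; linarith),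
      if_neg (show ¬ x = -κ by intro e; linarith)]
  by_cases h4 : y = -x - κ
  · rw [if_pos h4]
  · rw [if_neg h4, if_pos h]

lemma nuE6 (κ x y : ℝ) (hκ : 0 < κ) (hx : x = κ) (h1 : -κ ≤ y) (h2 : y ≤ 0) :
    nu κ (x, y) = 6 * κ + y := by
  simp only [nu]
  rw [if_neg (by rintro ⟨e1, -⟩; linarith),
      if_neg (by rintro ⟨e1, -⟩; linarith),
      if_neg (show ¬ x = -κ by intro e; linarith),
      if_neg (show ¬ y = -x - κ by intro e; linarith)]
  by_cases h5 : y = -κ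
  · rw [if_pos h5]; linarith
  · rw [if_neg h5, if_pos ⟨hx, h2⟩]

lemma nuE7 (κ x y : ℝ) (hκ : 0 < κ) (h : y = x - κ) (hx : κ ≤ x) :
    nu κ (x, y) = 5 * κ + x := by
  simp only [nu]
  rw [if_neg (by rintro ⟨e1, -⟩; linarith),
      if_neg (by rintro ⟨-, e2⟩; linarith),
      if_neg (show ¬ x = -κ by intro e; linarith),
      if_neg (show ¬ y = -x - κ by intro e; linarith),
      if_neg (show ¬ y = -κ by intro e; linarith)]
  by_cases h6 : x = κ ∧ y ≤ 0
  · rw [if_pos h6]; obtain ⟨e, -⟩ := h6; linarith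
  · rw [if_neg h6, if_pos ⟨h, hx⟩]

lemma nuE8 (κ x y : ℝ) (hκ : 0 < κ) (h : y = κ) (hx : κ ≤ x) :
    nu κ (x, y) = 9 * κ - x := by
  simp only [nu]
  rw [if_neg (by rintro ⟨e1, -⟩; linarith),
      if_neg (by rintro ⟨-, e2⟩; linarith),
      if_neg (show ¬ x = -κ by intro e; linarith),
      if_neg (show ¬ y = -x - κ by intro e; linarith),
      if_neg (show ¬ y = -κ by intro e; linarith),
      if_neg (by rintro ⟨-, e2⟩; linarith)]
  by_cases h7 : y = x - κ ∧ κ ≤ x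
  · rw [if_pos h7]; obtain ⟨e, -⟩ := h7; linarith
  · rw [if_neg h7, if_pos ⟨h, hx⟩]

lemma nuE9 (κ x y : ℝ) (hκ : 0 < κ) (hx : x = κ) (h1 : κ ≤ y) (h2 : y < 2 * κ) :
    nu κ (x, y) = 7 * κ + y := by
  simp only [nu]
  rw [if_neg (by rintro ⟨e1, -⟩; linarith),
      if_neg (by rintro ⟨-, e2⟩; linarith),
      if_neg (show ¬ x = -κ by intro e; linarith),
      if_neg (show ¬ y = -x - κ by intro e; linarith),
      if_neg (show ¬ y = -κ by intro e; linarith),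
      if_neg (by rintro ⟨-, e2⟩; linarith),
      if_neg (by rintro ⟨e1, -⟩; linarith)]
  by_cases h8 : y = κ ∧ κ ≤ x
  · rw [if_pos h8]; obtain ⟨e, -⟩ := h8; linarith
  · rw [if_neg h8, if_pos ⟨hx, h1⟩]

lemma caseE1 (κ x y : ℝ) (hκ : 0 < κ) (hy : y = x + κ) (hx0 : 0 ≤ x) (hx1 : x ≤ κ) :
    ∃ n : ℤ, nu κ (brownMap (x, y)) = nu κ (x, y) + 5 * κ + 9 * κ * n := by
  have hb : brownMap (x, y) = (κ, -x) := by
    simp only [brownMap, Prod.mk.injEq]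
    rw [abs_of_nonneg (show (0:ℝ) ≤ y by linarith),
        show -x + y = κ by linarith]
    exact ⟨rfl, by rw [abs_of_nonneg hκ.le]; linarith⟩
  rw [hb, nuE6 κ κ (-x) hκ rfl (by linarith) (by linarith), nuE1 κ x y hy hx0]
  exact ⟨0, by push_cast; linarith⟩

lemma caseE2 (κ x y : ℝ) (hκ : 0 < κ) (hy : y = κ) (hx0 : -κ ≤ x) (hx1 : x ≤ 0) :
    ∃ n : ℤ, nu κ (brownMap (x, y)) = nu κ (x, y) + 5 * κ + 9 * κ * n := by
  have hb : brownMap (x, y) = (-x + κ, -x) := by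
    simp only [brownMap, Prod.mk.injEq]
    rw [hy, abs_of_nonneg hκ.le]
    exact ⟨rfl, by rw [abs_of_nonneg (show (0:ℝ) ≤ -x + κ by linarith)]; ring⟩
  rw [hb, nuE7 κ (-x + κ) (-x) hκ (by ring) (by linarith), nuE2 κ x y hy hx1]
  exact ⟨0, by push_cast; linarith⟩

lemma caseE3 (κ x y : ℝ) (hκ : 0 < κ) (hx : x = -κ) (hy0 : 0 ≤ y) (hy1 : y ≤ κ) :
    ∃ n : ℤ, nu κ (brownMap (x, y)) = nu κ (x, y) + 5 * κ + 9 * κ * n := by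
  have hb : brownMap (x, y) = (κ + y, κ) := by
    simp only [brownMap, Prod.mk.injEq]
    rw [abs_of_nonneg hy0, show -x + y = κ + y by rw [hx]; ring]
    exact ⟨rfl, by rw [abs_of_nonneg (show (0:ℝ) ≤ κ + y by linarith)]; ring⟩
  rw [hb, nuE8 κ (κ + y) κ hκ rfl (by linarith), nuE3 κ x y hκ hx]
  exact ⟨0, by push_cast; linarith⟩

lemma caseE4 (κ x y : ℝ) (hκ : 0 < κ) (hy : y = -x - κ) (hx0 : -κ ≤ x) (hx1 : x ≤ 0) :
    ∃ n : ℤ, nu κ (brownMap (x, y)) = nu κ (x, y) + 5 * κ + 9 * κ * n := by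
  have hb : brownMap (x, y) = (κ, x + 2 * κ) := by
    simp only [brownMap, Prod.mk.injEq]
    rw [abs_of_nonpos (show y ≤ 0 by linarith),
        show -x + -y = κ by linarith]
    exact ⟨rfl, by rw [abs_of_nonneg hκ.le]; linarith⟩
  rcases lt_or_eq_of_le hx1 with hlt | heq
  · rw [hb, nuE9 κ κ (x + 2 * κ) hκ rfl (by linarith) (by linarith),
        nuE4 κ x y hκ hy hx0]
    exact ⟨0, by push_cast; linarith⟩
  · rw [hb, nuE1 κ κ (x + 2 * κ) (by rw [heq]; ring) hκ.le,
        nuE4 κ x y hκ hy hx0]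
    exact ⟨-1, by push_cast; linarith⟩

lemma caseE5 (κ x y : ℝ) (hκ : 0 < κ) (hy : y = -κ) (hx0 : 0 ≤ x) (hx1 : x ≤ κ) :
    ∃ n : ℤ, nu κ (brownMap (x, y)) = nu κ (x, y) + 5 * κ + 9 * κ * n := by
  have hb : brownMap (x, y) = (-x + κ, 2 * κ - x) := by
    simp only [brownMap, Prod.mk.injEq]
    rw [hy, abs_neg, abs_of_nonneg hκ.le]
    exact ⟨rfl, by rw [abs_of_nonneg (show (0:ℝ) ≤ -x + κ by linarith)]; ring⟩
  rw [hb, nuE1 κ (-x + κ) (2 * κ - x) (by ring) (by linarith),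
      nuE5 κ x y hκ hy hx0]
  exact ⟨-1, by push_cast; linarith⟩

lemma caseE6 (κ x y : ℝ) (hκ : 0 < κ) (hx : x = κ) (hy0 : -κ ≤ y) (hy1 : y ≤ 0) :
    ∃ n : ℤ, nu κ (brownMap (x, y)) = nu κ (x, y) + 5 * κ + 9 * κ * n := by
  have hb : brownMap (x, y) = (-κ - y, κ) := by
    simp only [brownMap, Prod.mk.injEq]
    rw [abs_of_nonpos hy1, show -x + -y = -κ - y by rw [hx]; ring]
    exact ⟨rfl, by rw [abs_of_nonpos (show -κ - y ≤ 0 by linarith)]; ring⟩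
  rw [hb, nuE2 κ (-κ - y) κ rfl (by linarith), nuE6 κ x y hκ hx hy0 hy1]
  exact ⟨-1, by push_cast; linarith⟩

lemma caseE7 (κ x y : ℝ) (hκ : 0 < κ) (hy : y = x - κ) (hx0 : κ ≤ x) (hx1 : x ≤ 2 * κ) :
    ∃ n : ℤ, nu κ (brownMap (x, y)) = nu κ (x, y) + 5 * κ + 9 * κ * n := by
  have hb : brownMap (x, y) = (-κ, -x + 2 * κ) := by
    simp only [brownMap, Prod.mk.injEq]
    rw [abs_of_nonneg (show (0:ℝ) ≤ y by linarith), show -x + y = -κ by linarith]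
    exact ⟨rfl, by rw [abs_neg, abs_of_nonneg hκ.le]; linarith⟩
  rw [hb, nuE3 κ (-κ) (-x + 2 * κ) hκ rfl, nuE7 κ x y hκ hy hx0]
  exact ⟨-1, by push_cast; linarith⟩

lemma caseE8 (κ x y : ℝ) (hκ : 0 < κ) (hy : y = κ) (hx0 : κ ≤ x) (hx1 : x ≤ 2 * κ) :
    ∃ n : ℤ, nu κ (brownMap (x, y)) = nu κ (x, y) + 5 * κ + 9 * κ * n := by
  have hb : brownMap (x, y) = (-x + κ, x - 2 * κ) := by
    simp only [brownMap, Prod.mk.injEq]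
    rw [hy, abs_of_nonneg hκ.le]
    exact ⟨rfl, by rw [abs_of_nonpos (show -x + κ ≤ 0 by linarith)]; ring⟩
  rw [hb, nuE4 κ (-x + κ) (x - 2 * κ) hκ (by ring) (by linarith),
      nuE8 κ x y hκ hy hx0]
  exact ⟨-1, by push_cast; linarith⟩

lemma caseE9 (κ x y : ℝ) (hκ : 0 < κ) (hx : x = κ) (hy0 : κ ≤ y) (hy1 : y ≤ 2 * κ) :
    ∃ n : ℤ, nu κ (brownMap (x, y)) = nu κ (x, y) + 5 * κ + 9 * κ * n := by
  have hb : brownMap (x, y) = (-κ + y, -κ) := by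
    simp only [brownMap, Prod.mk.injEq]
    rw [abs_of_nonneg (show (0:ℝ) ≤ y by linarith)]
    refine ⟨by rw [hx], ?_⟩
    rw [hx, abs_of_nonneg (show (0:ℝ) ≤ -κ + y by linarith)]; ring
  rw [hb, nuE5 κ (-κ + y) (-κ) hκ rfl (by linarith)]
  rcases lt_or_eq_of_le hy1 with hlt | heq
  · rw [nuE9 κ x y hκ hx hy0 hlt]
    exact ⟨-1, by push_cast; linarith⟩
  · rw [nuE1 κ x y (by rw [heq, hx]; ring) (by linarith)]
    exact ⟨0, by push_cast; linarith⟩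

/-- Linearization of the Brown map on the tropical Jacobian: on the nonagon
`Υ_κ` the Brown map is the translation by `5κ` on `ℝ/9κℤ`:
`ν(Φ(P)) ≡ ν(P) + 5κ (mod 9κ)`. -/
theorem brown_map_translation_on_jacobian (κ : ℝ) (hκ : 0 < κ) (p : ℝ × ℝ)
    (hp : min (H p.1 p.2) (H p.2 p.1) = κ) :
    ∃ n : ℤ, nu κ (brownMap p) = nu κ p + 5 * κ + 9 * κ * n := by
  obtain ⟨x, y⟩ := p
  simp only at hp
  have hA : κ ≤ H x y := hp ▸ min_le_left _ _
  have hB : κ ≤ H y x := hp ▸ min_le_right _ _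
  have hd : H x y = κ ∨ H y x = κ := by
    rcases min_choice (H x y) (H y x) with h | h
    · exact Or.inl (h.symm.trans hp)
    · exact Or.inr (h.symm.trans hp)
  simp only [H, le_max_iff] at hA hB
  rcases hd with hd | hd
  · -- H x y = κ
    have hc : x ≤ κ ∧ -y ≤ κ ∧ -x + y ≤ κ ∧ -x - y ≤ κ := by
      have h := le_of_eq hd
      simp only [H, max_le_iff] at h
      exact ⟨h.1, h.2.1, h.2.2.1, h.2.2.2⟩
    obtain ⟨c1, c2, c3, c4⟩ := hc
    rcases hA with d | d | d | d
    · -- x = κ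
      have hx : x = κ := le_antisymm c1 d
      rcases hB with e | e | e | e
      · exact caseE9 κ x y hκ hx e (by linarith)
      · exfalso; linarith
      · exact caseE6 κ x y hκ hx (by linarith) (by linarith)
      · exfalso; linarith
    · -- y = -κ
      exact caseE5 κ x y hκ (by linarith) (by linarith) c1
    · -- y = x + κ
      have hy : y = x + κ := by linarith
      rcases hB with e | e | e | e
      · exact caseE1 κ x y hκ hy (by linarith) c1
      · exact caseE3 κ x y hκ (by linarith) (by linarith) (by linarith)
      · exfalso; linarith
      · exact caseE3 κ x y hκ (by linarith) (by linarith) (by linarith)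
    · -- y = -x - κ
      exact caseE4 κ x y hκ (by linarith) (by linarith) (by linarith)
  · -- H y x = κ
    have hc : y ≤ κ ∧ -x ≤ κ ∧ -y + x ≤ κ ∧ -y - x ≤ κ := by
      have h := le_of_eq hd
      simp only [H, max_le_iff] at h
      exact ⟨h.1, h.2.1, h.2.2.1, h.2.2.2⟩
    obtain ⟨c1, c2, c3, c4⟩ := hc
    rcases hB with d | d | d | d
    · -- y = κ
      have hy : y = κ := le_antisymm c1 d
      rcases hA with e | e | e | e
      · exact caseE8 κ x y hκ hy e (by linarith)
      · exfalso; linarith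
      · exact caseE2 κ x y hκ hy (by linarith) (by linarith)
      · exfalso; linarith
    · -- x = -κ
      exact caseE3 κ x y hκ (by linarith) (by linarith) c1
    · -- y = x - κ
      have hy : y = x - κ := by linarith
      rcases hA with e | e | e | e
      · exact caseE7 κ x y hκ hy e (by linarith)
      · exact caseE5 κ x y hκ (by linarith) (by linarith) (by linarith)
      · exfalso; linarith
      · exact caseE5 κ x y hκ (by linarith) (by linarith) (by linarith)
    · -- y = -x - κ
      exact caseE4 κ x y hκ (by linarith) (by linarith) (by linarith)
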